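/- For any nonempty finite set X with |X| = n and any family 𝒜 ⊆ 𝒫(X), the cylindrical dimension of 𝒜 is at most 2^{n-1}. -/
import Mathlib


open Set

/-- A family of sets is convex if it is closed under set-theoretic betweenness. -/
def IsConvexFam {X : Type*} (𝒜 : Set (Set X)) : Prop :=
  ∀ S ∈ 𝒜, ∀ T ∈ 𝒜, ∀ C : Set X, S ⊆ C → C ⊆ T → C ∈ 𝒜

/-- A family is dominated if its union belongs to it. -/
def IsDominatedFam {X : Type*} (𝒜 : Set (Set X)) : Prop := ⋃₀ 𝒜 ∈ 𝒜

/-- A family is supported if it is nonempty and its intersection belongs to it. -/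
def IsSupportedFam {X : Type*} (𝒜 : Set (Set X)) : Prop := 𝒜.Nonempty ∧ ⋂₀ 𝒜 ∈ 𝒜

/-- A family is an interval if it equals `[A,B] = {C | A ⊆ C ⊆ B}` for some `A ⊆ B`. -/
def IsIntervalFam {X : Type*} (𝒜 : Set (Set X)) : Prop :=
  ∃ A B : Set X, A ⊆ B ∧ 𝒜 = Set.Icc A B

/-- `𝒢` dominates `𝒜` if there are dominated convex families `𝒟 G ⊆ 𝒜` (`G ∈ 𝒢`)
with `⋃ G ∈ 𝒢, 𝒟 G = 𝒜` and `⋃₀ (𝒟 G) = G`. -/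
def DominatesFam {X : Type*} (𝒢 𝒜 : Set (Set X)) : Prop :=
  𝒢 ⊆ 𝒜 ∧ ∃ 𝒟 : Set X → Set (Set X),
    (∀ G ∈ 𝒢, 𝒟 G ⊆ 𝒜 ∧ IsConvexFam (𝒟 G) ∧ IsDominatedFam (𝒟 G) ∧ ⋃₀ (𝒟 G) = G) ∧
    (⋃ G ∈ 𝒢, 𝒟 G) = 𝒜

/-- `𝒦` supports `𝒜` if there are supported convex families `𝒮 K ⊆ 𝒜` (`K ∈ 𝒦`)
with `⋃ K ∈ 𝒦, 𝒮 K = 𝒜` and `⋂₀ (𝒮 K) = K`. -/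
def SupportsFam {X : Type*} (𝒦 𝒜 : Set (Set X)) : Prop :=
  𝒦 ⊆ 𝒜 ∧ ∃ 𝒮 : Set X → Set (Set X),
    (∀ K ∈ 𝒦, 𝒮 K ⊆ 𝒜 ∧ IsConvexFam (𝒮 K) ∧ IsSupportedFam (𝒮 K) ∧ ⋂₀ (𝒮 K) = K) ∧
    (⋃ K ∈ 𝒦, 𝒮 K) = 𝒜

/-- The upper dimension: the minimal cardinality of a dominating subfamily. -/
noncomputable def upperDim {X : Type*} (𝒜 : Set (Set X)) : ℕ∞ :=
  sInf {n : ℕ∞ | ∃ 𝒢 : Set (Set X), DominatesFam 𝒢 𝒜 ∧ 𝒢.encard = n}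

/-- The dual upper dimension: the minimal cardinality of a supporting subfamily. -/
noncomputable def dualDim {X : Type*} (𝒜 : Set (Set X)) : ℕ∞ :=
  sInf {n : ℕ∞ | ∃ 𝒦 : Set (Set X), SupportsFam 𝒦 𝒜 ∧ 𝒦.encard = n}

/-- The cylindrical dimension: the minimal number of intervals whose union is `𝒜`. -/
noncomputable def cylDim {X : Type*} (𝒜 : Set (Set X)) : ℕ∞ :=
  sInf {n : ℕ∞ | ∃ 𝕀 : Set (Set (Set X)),
    (∀ J ∈ 𝕀, IsIntervalFam J) ∧ ⋃₀ 𝕀 = 𝒜 ∧ 𝕀.encard = n}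

open Classical in
noncomputable def chiFun {X : Type*} (A : Set X) (x : X) : Bool := decide (x ∈ A)

/-- The set-theoretic operation corresponding to a binary operation on `{0,1}`. -/
noncomputable def setOp {X : Type*} (op : Bool → Bool → Bool) (A B : Set X) : Set X :=
  {x | op (chiFun A x) (chiFun B x) = true}

/-- The tensor operation on families corresponding to a binary operation on `{0,1}`. -/
noncomputable def tensorFam {X : Type*} (op : Bool → Bool → Bool)
    (𝒜 ℬ : Set (Set X)) : Set (Set X) :=
  Set.image2 (setOp op) 𝒜 ℬ

/-- The convex shadow of `A` in `𝒜`. -/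
def convexShadow {X : Type*} (𝒜 : Set (Set X)) (A : Set X) : Set (Set X) :=
  {B | B ⊆ A ∧ Set.Icc B A ⊆ 𝒜}

/-- Domain of a relation. -/
def relDom {X Y : Type*} (R : Set (X × Y)) : Set X := {x | ∃ y, (x, y) ∈ R}

/-- Range of a relation. -/
def relRg {X Y : Type*} (R : Set (X × Y)) : Set Y := {y | ∃ x, (x, y) ∈ R}

/-- The family of (partial) functions from `X` to `Y`, as sets of pairs. -/
def partialFunFam (X Y : Type*) : Set (Set (X × Y)) :=
  {f | ∀ x y y', (x, y) ∈ f → (x, y') ∈ f → y = y'}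

/-- The family of relations on `X` with disjoint domain and range. -/
def exclFam (X : Type*) : Set (Set (X × X)) :=
  {R | relDom R ∩ relRg R = ∅}

/-- The family of relations on `X` whose domain is included in their range. -/
def inclFam (X : Type*) : Set (Set (X × X)) :=
  {R | relDom R ⊆ relRg R}

/-- The family of anonymous relations: every point of the domain has two distinct images. -/
def anonFam (X Y : Type*) : Set (Set (X × Y)) :=
  {R | ∀ x ∈ relDom R, ∃ y y' : Y, y ≠ y' ∧ (x, y) ∈ R ∧ (x, y') ∈ R}

/-- The family of rectangles `A × B`. -/
def rectFam (X Y : Type*) : Set (Set (X × Y)) :=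
  {P | ∃ (A : Set X) (B : Set Y), P = A ×ˢ B}

/-- General tensor disjunction of an indexed family of families of sets. -/
def gTensorDisj {ι X : Type*} (𝒜 : ι → Set (Set X)) : Set (Set X) :=
  {U | ∃ f : ι → Set X, (∀ i, f i ∈ 𝒜 i) ∧ U = ⋃ i, f i}

/-- The Kripke operator associated to a relation `ℛ ⊆ 𝒫(Y) × 𝒫(X)^n`. -/
def kripkeOp {X Y : Type*} {n : ℕ} (ℛ : Set (Set Y × (Fin n → Set X)))
    (𝒜 : Fin n → Set (Set X)) : Set (Set Y) :=
  {B | ∃ A : Fin n → Set X, (∀ i, A i ∈ 𝒜 i) ∧ (B, A) ∈ ℛ}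

theorem stmt2 {X : Type*} [Fintype X] [Nonempty X] (𝒜 : Set (Set X)) :
    cylDim 𝒜 ≤ ((2 ^ (Fintype.card X - 1) : ℕ) : ℕ∞) := by
  classical
  obtain ⟨x0⟩ := ‹Nonempty X›
  set lo : Set X → Set X := fun a => if a ∈ 𝒜 then a else insert x0 a with hlo
  set hi : Set X → Set X := fun a => if insert x0 a ∈ 𝒜 then insert x0 a else a with hhi
  set F : Set X → Set (Set X) := fun a => Set.Icc (lo a) (hi a) with hF
  set D : Set (Set X) := {a | x0 ∉ a ∧ (a ∈ 𝒜 ∨ insert x0 a ∈ 𝒜)} with hD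
  have hIcc : ∀ a : Set X, x0 ∉ a → ∀ C ∈ Set.Icc a (insert x0 a),
      C = a ∨ C = insert x0 a := by
    intro a hx C hC
    by_cases h : x0 ∈ C
    · right
      apply subset_antisymm hC.2
      intro y hy
      rcases hy with rfl | hy
      · exact h
      · exact hC.1 hy
    · left
      apply subset_antisymm _ hC.1
      intro y hy
      rcases hC.2 hy with rfl | hy
      · exact absurd hy h
      · exact hy
  have key : ∀ a ∈ D, F a ⊆ 𝒜 ∧ lo a ⊆ hi a ∧ (a ∈ 𝒜 → a ∈ F a) ∧
      (insert x0 a ∈ 𝒜 → insert x0 a ∈ F a) := by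
    intro a ha
    obtain ⟨hx, hcase⟩ := ha
    by_cases h1 : a ∈ 𝒜 <;> by_cases h2 : insert x0 a ∈ 𝒜
    · simp only [hF, hlo, hhi, if_pos h1, if_pos h2]
      refine ⟨?_, Set.subset_insert _ _, ?_, ?_⟩
      · intro C hC
        rcases hIcc a hx C hC with rfl | rfl <;> assumption
      · exact fun _ => ⟨le_refl _, Set.subset_insert _ _⟩
      · exact fun _ => ⟨Set.subset_insert _ _, le_refl _⟩
    · simp only [hF, hlo, hhi, if_pos h1, if_neg h2]
      refine ⟨?_, le_refl _, fun _ => ⟨le_refl _, le_refl _⟩, fun h => absurd h h2⟩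
      intro C hC
      have : C = a := le_antisymm hC.2 hC.1
      rw [this]; exact h1
    · simp only [hF, hlo, hhi, if_neg h1, if_pos h2]
      refine ⟨?_, le_refl _, fun h => absurd h h1, fun _ => ⟨le_refl _, le_refl _⟩⟩
      intro C hC
      have : C = insert x0 a := le_antisymm hC.2 hC.1
      rw [this]; exact h2
    · rcases hcase with h | h
      · exact absurd h h1
      · exact absurd h h2
  -- the covering family of intervals
  set 𝕀 : Set (Set (Set X)) := F '' D with h𝕀
  have hint : ∀ J ∈ 𝕀, IsIntervalFam J := by
    rintro J ⟨a, ha, rfl⟩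
    exact ⟨lo a, hi a, (key a ha).2.1, rfl⟩
  have hunion : ⋃₀ 𝕀 = 𝒜 := by
    apply subset_antisymm
    · rintro A ⟨J, ⟨a, ha, rfl⟩, hA⟩
      exact (key a ha).1 hA
    · intro A hA
      set a : Set X := A \ {x0} with ha
      have hx : x0 ∉ a := fun h => h.2 rfl
      have hAcase : A = a ∨ A = insert x0 a := by
        by_cases h : x0 ∈ A
        · right
          ext y
          simp only [Set.mem_insert_iff, ha, Set.mem_diff, Set.mem_singleton_iff]
          constructor
          · intro hy
            by_cases hyx : y = x0
            · exact Or.inl hyx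
            · exact Or.inr ⟨hy, hyx⟩
          · rintro (rfl | ⟨hy, _⟩)
            · exact h
            · exact hy
        · left
          ext y
          simp only [ha, Set.mem_diff, Set.mem_singleton_iff]
          exact ⟨fun hy => ⟨hy, fun e => h (e ▸ hy)⟩, fun hy => hy.1⟩
      have haD : a ∈ D := by
        refine ⟨hx, ?_⟩
        rcases hAcase with h | h
        · exact Or.inl (h ▸ hA)
        · exact Or.inr (h ▸ hA)
      refine ⟨F a, ⟨a, haD, rfl⟩, ?_⟩
      rcases hAcase with h | h
      · exact h ▸ (key a haD).2.2.1 (h ▸ hA)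
      · exact h ▸ (key a haD).2.2.2 (h ▸ hA)
  have hcyl : cylDim 𝒜 ≤ 𝕀.encard :=
    sInf_le ⟨𝕀, hint, hunion, rfl⟩
  refine hcyl.trans ?_
  -- cardinality bound
  have h1 : 𝕀.encard ≤ D.encard := Set.encard_image_le _ _
  have h2 : D ⊆ {a : Set X | x0 ∉ a} := fun a ha => ha.1
  have h3 : D.encard ≤ {a : Set X | x0 ∉ a}.encard := Set.encard_mono h2
  -- count sets avoiding x0 via restriction to the subtype
  set e : Set X → Set {x : X // x ≠ x0} := fun a => Subtype.val ⁻¹' a with he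
  have hinj : Set.InjOn e {a : Set X | x0 ∉ a} := by
    intro a ha b hb hab
    ext y
    by_cases hy : y = x0
    · subst hy
      simp only [Set.mem_setOf_eq] at ha hb
      exact ⟨fun h => absurd h ha, fun h => absurd h hb⟩
    · have := Set.ext_iff.mp hab ⟨y, hy⟩
      exact this
  have h4 : {a : Set X | x0 ∉ a}.encard = (e '' {a : Set X | x0 ∉ a}).encard :=
    (hinj.encard_image).symm
  have h5 : (e '' {a : Set X | x0 ∉ a}).encard ≤
      (Set.univ : Set (Set {x : X // x ≠ x0})).encard :=
    Set.encard_mono (Set.subset_univ _)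
  have h6 : (Set.univ : Set (Set {x : X // x ≠ x0})).encard
      = ((2 ^ (Fintype.card X - 1) : ℕ) : ℕ∞) := by
    rw [Set.encard_univ, ENat.card_eq_coe_fintype_card]
    congr 1
    rw [Fintype.card_set]
    congr 1
    have : Fintype.card {x : X // x ≠ x0} = Fintype.card X - 1 := by
      have := Fintype.card_subtype_compl (fun x : X => x = x0)
      simpa [Fintype.card_subtype_eq] using this
    exact this
  calc 𝕀.encard ≤ D.encard := h1
    _ ≤ {a : Set X | x0 ∉ a}.encard := h3
    _ = (e '' {a : Set X | x0 ∉ a}).encard := h4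
    _ ≤ (Set.univ : Set (Set {x : X // x ≠ x0})).encard := h5
    _ = _ := h6
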